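/- Let X be an infinite compact metric space, let h : X → X be a minimal homeomorphism, and let Y ⊆ X be a closed subset with nonempty interior. With the first-return notation, one has ⋃_{k=0}^{l} ⋃_{j=1}^{n(k)} h^j(Y_k) = X and ⋃_{k=0}^{l} h^{n(k)}(Y_k) = Y. -/

import Mathlib

/-- The first return time of `y` to `Y` under the homeomorphism `h`:
`r(y) = min {n ≥ 1 : h^n(y) ∈ Y}` (by convention `sInf ∅ = 0`). -/
noncomputable def firstReturnTime {X : Type*} [TopologicalSpace X]
    (h : X ≃ₜ X) (Y : Set X) (y : X) : ℕ :=
  sInf {n : ℕ | 1 ≤ n ∧ (⇑h)^[n] y ∈ Y}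

/-- The set of points of `Y` with first return time exactly `m`. -/
noncomputable def returnSet {X : Type*} [TopologicalSpace X]
    (h : X ≃ₜ X) (Y : Set X) (m : ℕ) : Set X :=
  {y ∈ Y | firstReturnTime h Y y = m}

section Aux

variable {X : Type*} [TopologicalSpace X]

lemma aux_zpow_continuous (h : X ≃ₜ X) (n : ℤ) :
    Continuous fun x => (h.toEquiv ^ n) x := by
  induction n using Int.induction_on with
  | zero => simpa using continuous_id'
  | succ k ih =>
      have : ∀ x : X, (h.toEquiv ^ ((k:ℤ)+1)) x = (h.toEquiv ^ (k:ℤ)) (h x) := by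
        intro x; rw [zpow_add_one, Equiv.Perm.mul_apply]; rfl
      simp only [this]; exact ih.comp h.continuous
  | pred k ih =>
      have : ∀ x : X, (h.toEquiv ^ (-(k:ℤ)-1)) x = (h.toEquiv ^ (-(k:ℤ))) (h.symm x) := by
        intro x; rw [sub_eq_add_neg, zpow_add, Equiv.Perm.mul_apply, zpow_neg_one]; rfl
      simp only [this]; exact ih.comp h.symm.continuous

lemma aux_zpow_natCast (h : X ≃ₜ X) (n : ℕ) (x : X) :
    (h.toEquiv ^ (n:ℤ)) x = (⇑h)^[n] x := by
  rw [zpow_natCast, ← Equiv.Perm.iterate_eq_pow]; rfl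

/-- Every forward orbit hits any nonempty open set at a positive time. -/
lemma aux_forward_hit [CompactSpace X] (h : X ≃ₜ X)
    (hmin : ∀ x : X, Dense (Set.range fun n : ℤ => (h.toEquiv ^ n) x))
    (U : Set X) (hU : IsOpen U) (hne : U.Nonempty) (x : X) :
    ∃ k : ℕ, 1 ≤ k ∧ (⇑h)^[k] x ∈ U := by
  set V : ℤ → Set X := fun n => (fun y => (h.toEquiv ^ n) y) ⁻¹' U with hV
  have hVopen : ∀ n, IsOpen (V n) := fun n => hU.preimage (aux_zpow_continuous h n)
  have hcover : (Set.univ : Set X) ⊆ ⋃ n, V n := by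
    intro y _
    obtain ⟨z, ⟨n, rfl⟩, hzU⟩ := (hmin y).exists_mem_open hU hne
    exact Set.mem_iUnion.2 ⟨n, hzU⟩
  obtain ⟨s, hs⟩ := isCompact_univ.elim_finite_subcover V hVopen hcover
  set N : ℕ := s.sup fun n => n.natAbs with hN
  have hz := hs (Set.mem_univ ((⇑h)^[N+1] x))
  simp only [Set.mem_iUnion] at hz
  obtain ⟨n, hns, hnU⟩ := hz
  have hbound : n.natAbs ≤ N := Finset.le_sup hns
  have hcomp : (h.toEquiv ^ (n + (N+1 : ℕ))) x ∈ U := by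
    have : (h.toEquiv ^ (n + (N+1 : ℕ))) x
        = (h.toEquiv ^ n) ((h.toEquiv ^ ((N+1 : ℕ) : ℤ)) x) := by
      rw [zpow_add, Equiv.Perm.mul_apply]
    rw [this, aux_zpow_natCast]
    exact hnU
  have hpos : 1 ≤ n + ((N:ℤ)+1) := by omega
  refine ⟨(n + ((N:ℤ)+1)).toNat, by omega, ?_⟩
  rw [← aux_zpow_natCast]
  have htn : ((n + ((N:ℤ)+1)).toNat : ℤ) = n + ((N:ℤ)+1) := Int.toNat_of_nonneg (by omega)
  rw [htn]
  push_cast at hcomp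
  exact hcomp

lemma aux_symm_min (h : X ≃ₜ X)
    (hmin : ∀ x : X, Dense (Set.range fun n : ℤ => (h.toEquiv ^ n) x)) :
    ∀ x : X, Dense (Set.range fun n : ℤ => (h.symm.toEquiv ^ n) x) := by
  intro x
  have key : ∀ n : ℤ, (h.symm.toEquiv ^ n) x = (h.toEquiv ^ (-n)) x := by
    intro n
    have h1 : h.symm.toEquiv = (h.toEquiv)⁻¹ := rfl
    rw [h1, inv_zpow, ← zpow_neg]
  have : (Set.range fun n : ℤ => (h.symm.toEquiv ^ n) x)
      = Set.range fun n : ℤ => (h.toEquiv ^ n) x := by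
    ext z
    constructor
    · rintro ⟨n, rfl⟩
      exact ⟨-n, by show (h.toEquiv ^ (-n)) x = _; rw [← key]⟩
    · rintro ⟨n, rfl⟩
      exact ⟨-n, by show (h.symm.toEquiv ^ (-n)) x = _; rw [key, neg_neg]⟩
  rw [this]
  exact hmin x

lemma aux_cancel (h : X ≃ₜ X) (j : ℕ) (x : X) :
    (⇑h)^[j] ((⇑h.symm)^[j] x) = x :=
  (Function.LeftInverse.iterate (fun y => h.apply_symm_apply y) j) x

end Aux

theorem rokhlin_towers_cover
    {X : Type*} [MetricSpace X] [CompactSpace X] [Infinite X]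
    (h : X ≃ₜ X)
    (hmin : ∀ x : X, Dense (Set.range fun n : ℤ => (h.toEquiv ^ n) x))
    (Y : Set X) (hYclosed : IsClosed Y) (hYint : (interior Y).Nonempty) :
    (⋃ (m : ℕ) (j : ℕ) (_ : 1 ≤ j) (_ : j ≤ m),
        (⇑h)^[j] '' closure (returnSet h Y m)) = Set.univ ∧
      (⋃ (m : ℕ), (⇑h)^[m] '' closure (returnSet h Y m)) = Y := by
  have hIntY : interior Y ⊆ Y := interior_subset
  -- Every point of Y returns to Y
  have hretS : ∀ y ∈ Y, {n : ℕ | 1 ≤ n ∧ (⇑h)^[n] y ∈ Y}.Nonempty := by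
    intro y _
    obtain ⟨k, hk1, hkU⟩ := aux_forward_hit h hmin (interior Y) isOpen_interior hYint y
    exact ⟨k, hk1, hIntY hkU⟩
  -- first return time lands in Y
  have hretmem : ∀ y ∈ Y, 1 ≤ firstReturnTime h Y y ∧ (⇑h)^[firstReturnTime h Y y] y ∈ Y := by
    intro y hy
    exact Nat.sInf_mem (hretS y hy)
  -- backward entrance lemma
  have hback : ∀ x : X, ∃ m : ℕ, ∃ z : X, 1 ≤ m ∧ z ∈ Y ∧ (⇑h)^[m] z = x ∧
      ∀ j, 1 ≤ j → j < m → (⇑h)^[j] z ∉ Y := by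
    intro x
    have hmin' := aux_symm_min h hmin
    obtain ⟨k0, hk01, hk0U⟩ :=
      aux_forward_hit h.symm hmin' (interior Y) isOpen_interior hYint x
    have hS' : {k : ℕ | 1 ≤ k ∧ (⇑h.symm)^[k] x ∈ Y}.Nonempty := ⟨k0, hk01, hIntY hk0U⟩
    set m := sInf {k : ℕ | 1 ≤ k ∧ (⇑h.symm)^[k] x ∈ Y} with hm
    obtain ⟨hm1, hmY⟩ := Nat.sInf_mem hS'
    refine ⟨m, (⇑h.symm)^[m] x, hm1, hmY, aux_cancel h m x, ?_⟩
    intro j hj1 hjm hmem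
    have hadd : j + (m - j) = m := by omega
    have heq : (⇑h)^[j] ((⇑h.symm)^[m] x) = (⇑h.symm)^[m - j] x := by
      conv_lhs => rw [← hadd, Function.iterate_add_apply]
      exact aux_cancel h j _
    rw [heq] at hmem
    have : m ≤ m - j := Nat.sInf_le ⟨by omega, hmem⟩
    omega
  -- each tower level maps into Y at the top
  have hsub : ∀ m : ℕ, closure (returnSet h Y m) ⊆ (⇑h)^[m] ⁻¹' Y := by
    intro m
    refine closure_minimal ?_ (hYclosed.preimage (h.continuous.iterate m))
    rintro y ⟨hyY, hyr⟩
    have := (hretmem y hyY).2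
    rwa [hyr] at this
  constructor
  · apply Set.eq_univ_of_forall
    intro x
    obtain ⟨m, z, hm1, hzY, hmz, hmin_j⟩ := hback x
    set m' := firstReturnTime h Y z with hm'
    have ⟨hm'1, hm'Y⟩ := hretmem z hzY
    have hmm' : m ≤ m' := by
      by_contra hlt
      exact hmin_j m' hm'1 (by omega) hm'Y
    have hzmem : z ∈ returnSet h Y m' := ⟨hzY, rfl⟩
    simp only [Set.mem_iUnion]
    exact ⟨m', m, hm1, hmm', z, subset_closure hzmem, hmz⟩
  · apply Set.Subset.antisymm
    · apply Set.iUnion_subset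
      intro m
      exact Set.image_subset_iff.2 (hsub m)
    · intro y hy
      obtain ⟨m, z, hm1, hzY, hmz, hmin_j⟩ := hback y
      have ⟨hm'1, hm'Y⟩ := hretmem z hzY
      have hle : firstReturnTime h Y z ≤ m := Nat.sInf_le ⟨hm1, by rw [hmz]; exact hy⟩
      have hge : m ≤ firstReturnTime h Y z := by
        by_contra hlt
        exact hmin_j _ hm'1 (by omega) hm'Y
      have heq : firstReturnTime h Y z = m := le_antisymm hle hge
      simp only [Set.mem_iUnion]
      exact ⟨m, z, subset_closure ⟨hzY, heq⟩, hmz⟩
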